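/- Let Z(W,Z) be a zoom space, with Z = (Z_i)_{i∈I_W}, and let α ≤ ω₁. Then: (a) for every F ⊆ W, if F ∈ F_α(W), then the set V_F = (F∖I_W) ∪ ⋃{Z_i : i ∈ F∩I_W} belongs to F_α(Z(W,Z)); (b) for every family C = (C_i)_{i∈I_W} with C_i ⊆ Z_i for each i, if C_i ∈ F_α(Z_i) for every i ∈ I_W, then the zoom space Z(W,C) (as a subset of Z(W,Z)) belongs to F_α(Z(W,Z)). -/

import Mathlib

noncomputable section
open Classical Set Topology Filter Ordinal

universe u v

namespace FBorelPaper

/-! ### Ordinal parity -/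

/-- The first uncountable ordinal. -/
def omega1 : Ordinal.{0} := Ordinal.omega 1

/-- An ordinal `a = λ + m` (with `λ` limit or zero, `m < ω`) is *even* iff `m` is even. -/
def EvenOrd (a : Ordinal.{0}) : Prop := a % 2 = 0

/-- An ordinal `a = λ + m` (with `λ` limit or zero, `m < ω`) is *odd* iff `m` is odd. -/
def OddOrd (a : Ordinal.{0}) : Prop := a % 2 = 1

/-- For `a = λ + 2n + i` (with `λ` limit or zero, `n < ω`, `i ∈ {0,1}`),
`ordPrime a = λ + n` (the ordinal `α'` of the paper). -/
def ordPrime (a : Ordinal.{0}) : Ordinal.{0} :=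
  Ordinal.omega0 * (a / Ordinal.omega0) + (a % Ordinal.omega0) / 2

/-! ### The F-Borel hierarchy -/

/-- The `F`-Borel hierarchy of a topological space: `FBorel Y 0` is the family of closed
sets, and for `0 < a`, `FBorel Y a` consists of all countable unions (for odd `a`),
resp. countable intersections (for even `a`), of members of `⋃ b < a, FBorel Y b`. -/
def FBorel (Y : Type u) [TopologicalSpace Y] : Ordinal.{0} → Set (Set Y) :=
  WellFounded.fix Ordinal.lt_wf (C := fun _ => Set (Set Y)) fun a ih =>
    if a = 0 then { F | IsClosed F }
    else if EvenOrd a then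
      { S | ∃ f : ℕ → Set Y, (∀ n, ∃ b, ∃ h : b < a, f n ∈ ih b h) ∧ S = ⋂ n, f n }
    else
      { S | ∃ f : ℕ → Set Y, (∀ n, ∃ b, ∃ h : b < a, f n ∈ ih b h) ∧ S = ⋃ n, f n }

/-- The list `(σ 0, …, σ (k-1))` of the first `k` values of `σ : ℕ → ℕ`. -/
def seqPrefix (σ : ℕ → ℕ) (k : ℕ) : List ℕ := List.ofFn fun i : Fin k => σ i

/-- A Suslin scheme: a monotone family of sets indexed by finite sequences. -/
def IsSuslinScheme {Y : Type u} (C : List ℕ → Set Y) : Prop :=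
  ∀ ⦃s t : List ℕ⦄, s <+: t → C t ⊆ C s

/-- The Suslin operation `A(C) = ⋃_{σ ∈ ω^ω} ⋂_k C(σ|k)`. -/
def suslinOp {Y : Type u} (C : List ℕ → Set Y) : Set Y :=
  ⋃ σ : ℕ → ℕ, ⋂ k : ℕ, C (seqPrefix σ k)

/-- The Suslin-F subsets of `Y`: results of the Suslin operation applied to schemes of
closed sets. -/
def SuslinF (Y : Type u) [TopologicalSpace Y] : Set (Set Y) :=
  { S | ∃ C : List ℕ → Set Y, (∀ s, IsClosed (C s)) ∧ S = suslinOp C }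

/-- The classes `F_a(Y)` for `a ≤ ω₁`, where `F_{ω₁}(Y)` is the class of Suslin-F sets. -/
def FClass (Y : Type u) [TopologicalSpace Y] (a : Ordinal.{0}) : Set (Set Y) :=
  if a < omega1 then FBorel Y a else SuslinF Y

/-- `ComplIn Y X` is the complexity of `X` in `Y`: the least `a ≤ ω₁` with `X ∈ F_a(Y)`. -/
def ComplIn (Y : Type u) [TopologicalSpace Y] (X : Set Y) : Ordinal.{0} :=
  sInf { a : Ordinal.{0} | a ≤ omega1 ∧ X ∈ FClass Y a }

/-! ### Compactifications, K-analytic spaces, local complexity -/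

/-- `(K, e)` is a compactification of `X`: `K` is compact Hausdorff and `e` is a dense
embedding of `X` into `K`. -/
def IsCompactification (X : Type u) [TopologicalSpace X] (K : Type u) [TopologicalSpace K]
    (e : X → K) : Prop :=
  CompactSpace K ∧ T2Space K ∧ IsEmbedding e ∧ DenseRange e

/-- The set `Compl(X)` of all complexities attained by `X` in its compactifications. -/
def AttainedCompl (X : Type u) [TopologicalSpace X] : Set Ordinal.{0} :=
  { γ | ∃ (K : Type u) (_ : TopologicalSpace K) (e : X → K),
      IsCompactification X K e ∧ Set.range e ∈ SuslinF K ∧ γ = ComplIn K (Set.range e) }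

/-- A topological space is K-analytic iff it embeds as a Suslin-F subset of some compact
Hausdorff space. -/
def IsKAnalytic (X : Type u) [TopologicalSpace X] : Prop :=
  ∃ (K : Type u) (_ : TopologicalSpace K) (e : X → K),
    CompactSpace K ∧ T2Space K ∧ IsEmbedding e ∧ Set.range e ∈ SuslinF K

/-- The local complexity `Compl_y(X, Y)`: the least complexity of `cl(U) ∩ X` in `Y` over
all open neighborhoods `U` of `y` in `Y`. -/
def locComplAt (Y : Type u) [TopologicalSpace Y] (X : Set Y) (y : Y) : Ordinal.{0} :=
  sInf { γ : Ordinal.{0} | ∃ U : Set Y, IsOpen U ∧ y ∈ U ∧ γ = ComplIn Y (closure U ∩ X) }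

/-- The local complexity `Compl_loc(X, Y) = sup_{x ∈ X} Compl_x(X, Y)`. -/
def locCompl (Y : Type u) [TopologicalSpace Y] (X : Set Y) : Ordinal.{0} :=
  ⨆ x : X, locComplAt Y X (x : Y)

/-- The local complexity `Compl_locbar(X, Y) = sup_{y ∈ Y} Compl_y(X, Y)`. -/
def locComplBar (Y : Type u) [TopologicalSpace Y] (X : Set Y) : Ordinal.{0} :=
  ⨆ y : Y, locComplAt Y X y

/-! ### Trees on ω -/

/-- A tree on `ω`: a set of finite sequences closed under initial segments. -/
def IsTree (T : Set (List ℕ)) : Prop := ∀ ⦃s t : List ℕ⦄, s <+: t → t ∈ T → s ∈ T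

/-- A tree is well-founded iff it carries no infinite branch. -/
def WellFoundedTree (T : Set (List ℕ)) : Prop := ¬ ∃ σ : ℕ → ℕ, ∀ k : ℕ, seqPrefix σ k ∈ T

/-- `t` is a leaf of `T`: it belongs to `T` and has no immediate successor in `T`. -/
def IsLeafOf (T : Set (List ℕ)) (t : List ℕ) : Prop := t ∈ T ∧ ∀ n : ℕ, t ++ [n] ∉ T

/-- The tree `T^t = {s | t⌢s ∈ T}` corresponding to `t` in `T`. -/
def subtreeAt (T : Set (List ℕ)) (t : List ℕ) : Set (List ℕ) := { s | t ++ s ∈ T }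

/-- The smallest tree containing a set `S` of finite sequences. -/
def clTr (S : Set (List ℕ)) : Set (List ℕ) := { u | ∃ s ∈ S, u <+: s }

/-- The leaf derivative: keep the elements having some proper extension in `T`. -/
def leafDeriv (T : Set (List ℕ)) : Set (List ℕ) := { t ∈ T | ∃ s ∈ T, t <+: s ∧ t ≠ s }

/-- The derivative `D_iie`: keep the `t ∈ T` admitting infinitely many pairwise
incomparable extensions in `T` of pairwise different lengths. -/
def Diie (T : Set (List ℕ)) : Set (List ℕ) :=
  { t ∈ T | ∃ g : ℕ → List ℕ, (∀ n, g n ∈ T ∧ t <+: g n) ∧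
      ∀ ⦃m n : ℕ⦄, m < n →
        (¬ g m <+: g n) ∧ (¬ g n <+: g m) ∧ (g m).length ≠ (g n).length }

/-- Transfinitely iterated derivative, starting from `cl_Tr S` and taking intersections
at limit stages. -/
def iterDeriv (D : Set (List ℕ) → Set (List ℕ)) (S : Set (List ℕ)) (γ : Ordinal.{0}) :
    Set (List ℕ) :=
  Ordinal.limitRecOn γ (clTr S) (fun _ ih => D ih)
    (fun a _ ih => ⋂ b : Ordinal.{0}, ⋂ h : b < a, ih b h)

/-- The rank associated with the leaf derivative: the least `γ` such that the `(γ+1)`-st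
iterated leaf derivative is empty, and `ω₁` if there is no such countable ordinal. -/
def leafRank (T : Set (List ℕ)) : Ordinal.{0} :=
  if ∃ γ : Ordinal.{0}, γ < omega1 ∧ iterDeriv leafDeriv T (γ + 1) = ∅ then
    sInf { γ : Ordinal.{0} | iterDeriv leafDeriv T (γ + 1) = ∅ }
  else omega1

/-- `E` is the canonical extension of the `l(T)`-scheme `H` to the whole of `T`:
it agrees with `H` on the leaves of `T`, and at a non-leaf `t ∈ T` it is the union
(resp. the intersection) of its values at the immediate successors of `t` in `T` when
the leaf-rank of `T^t` is odd (resp. even). -/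
def IsSchemeExtension (Y : Type u) [TopologicalSpace Y] (T : Set (List ℕ))
    (H E : List ℕ → Set Y) : Prop :=
  (∀ t, IsLeafOf T t → E t = H t) ∧
  (∀ t ∈ T, ¬ IsLeafOf T t → OddOrd (leafRank (subtreeAt T t)) →
      E t = ⋃ n ∈ { n : ℕ | t ++ [n] ∈ T }, E (t ++ [n])) ∧
  (∀ t ∈ T, ¬ IsLeafOf T t → EvenOrd (leafRank (subtreeAt T t)) →
      E t = ⋂ n ∈ { n : ℕ | t ++ [n] ∈ T }, E (t ++ [n]))

/-- `H` (an `l(T)`-scheme of subsets of `X`) is a *universal simple `F_α`-representation*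
of `X`: `r_l(T) ≤ α`, and for every space `Y` containing (a copy of) `X`, the extension
of the scheme of closures `(cl_Y (H t))_t` computes `X` at the root. -/
def HasUniversalSimpleRep (X : Type u) [TopologicalSpace X] (α : Ordinal.{0}) : Prop :=
  ∃ (T : Set (List ℕ)) (H : List ℕ → Set X), IsTree T ∧ WellFoundedTree T ∧ [] ∈ T ∧
    leafRank T ≤ α ∧
    ∀ (Y : Type u) (_ : TopologicalSpace Y) (e : X → Y), IsEmbedding e →
      ∃ E : List ℕ → Set Y,
        IsSchemeExtension Y T (fun t => closure (e '' H t)) E ∧ E [] = Set.range e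

/-! ### Canonical trees -/

/-- Auxiliary indices for the canonical trees: at a successor `a = b + 1` every index is
`b`, and at a countable limit the indices enumerate all ordinals `< a` injectively. -/
def canonIdx (a : Ordinal.{0}) (n : ℕ) : Ordinal.{0} :=
  if hs : ∃ b, a = b + 1 then hs.choose
  else if hf : ∃ f : ℕ → Ordinal.{0}, Function.Injective f ∧ Set.range f = Set.Iio a then
    hf.choose n
  else 0

theorem canonIdx_lt {a : Ordinal.{0}} (h0 : a ≠ 0) (n : ℕ) : canonIdx a n < a := by
  unfold canonIdx
  split
  · next hs =>
      conv_rhs => rw [hs.choose_spec]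
      rw [Ordinal.add_one_eq_succ]
      exact Order.lt_succ _
  · split
    · next hf =>
        have hmem : hf.choose n ∈ Set.range hf.choose := Set.mem_range_self n
        rw [hf.choose_spec.2] at hmem
        exact hmem
    · first
        | exact pos_iff_ne_zero.mpr h0
        | exact Ordinal.pos_iff_ne_zero.mpr h0
        | exact lt_of_le_of_ne (Ordinal.zero_le _) (Ne.symm h0)

/-- The canonical "maximal" trees `T_α` of leaf-rank `α < ω₁` (with `T_α = ω^{<ω}` for
`α ≥ ω₁`): `T_0 = {∅}`, `T_{α+1} = {∅} ∪ ⋃_n n⌢T_α`, and at countable limits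
`T_α = {∅} ∪ ⋃_n n⌢T_{π_α(n)}` for an injective enumeration `π_α` of `α`. -/
def canonTree : Ordinal.{0} → Set (List ℕ) :=
  WellFounded.fix Ordinal.lt_wf (C := fun _ => Set (List ℕ)) fun a ih =>
    if h0 : a = 0 then {([] : List ℕ)}
    else if omega1 ≤ a then Set.univ
    else {([] : List ℕ)} ∪ ⋃ n : ℕ, (List.cons n) '' ih (canonIdx a n) (canonIdx_lt h0 n)

/-- The canonical trees `T^c_α`: `T_{α'}` for even `α`, and `{∅} ∪ 1⌢T_{α'}` for odd `α`. -/
def canonTreeC (a : Ordinal.{0}) : Set (List ℕ) :=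
  if EvenOrd a then canonTree (ordPrime a)
  else {([] : List ℕ)} ∪ (List.cons 1) '' canonTree (ordPrime a)

/-- The canonical trees `T^c_{α,i} = {∅} ∪ i⌢T_{α'}` (for odd `α`). -/
def canonTreeCi (a : Ordinal.{0}) (i : ℕ) : Set (List ℕ) :=
  {([] : List ℕ)} ∪ (List.cons i) '' canonTree (ordPrime a)

/-! ### Admissible maps, `R_T` and regular representations -/

/-- An admissible map on a tree `T`: monotone w.r.t. extension, with
`|φ(t)| = t(0) + ⋯ + t(|t|-1)` for all `t ∈ T`. -/
def Admissible (T : Set (List ℕ)) (φ : List ℕ → List ℕ) : Prop :=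
  (∀ ⦃s t : List ℕ⦄, s ∈ T → t ∈ T → s <+: t → φ s <+: φ t) ∧
  (∀ t ∈ T, (φ t).length = t.sum)

/-- `R_T(C)`: the points of `C(∅)` admitting an admissible witness map along `T`. -/
def RT {Y : Type u} (T : Set (List ℕ)) (C : List ℕ → Set Y) : Set Y :=
  { x | x ∈ C [] ∧ ∃ φ : List ℕ → List ℕ, Admissible T φ ∧ ∀ t ∈ T, x ∈ C (φ t) }

/-- `R_α(C) = R_{T^c_α}(C)`. -/
def Ralpha {Y : Type u} (a : Ordinal.{0}) (C : List ℕ → Set Y) : Set Y :=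
  RT (canonTreeC a) C

/-- A Suslin scheme `C` of subsets of `X ⊆ Y` is *complete on `X`*: it is a Suslin scheme
on `X` (it consists of subsets of `X` and the Suslin operation applied to it covers `X`)
such that every nontrivial filter containing, for each `n`, a set `C s` with `|s| = n`,
has an accumulation point in `X`. -/
def IsCompleteOn (Y : Type u) [TopologicalSpace Y] (X : Set Y) (C : List ℕ → Set Y) :
    Prop :=
  IsSuslinScheme C ∧ (∀ s, C s ⊆ X) ∧ X ⊆ suslinOp C ∧
  ∀ F : Filter Y, F.NeBot → (∀ n : ℕ, ∃ s : List ℕ, s.length = n ∧ C s ∈ F) →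
    ∃ x ∈ X, ClusterPt x F

/-- The tree `S_C(y)` of finite sequences `s` with `y ∈ cl_Y (C s)`. -/
def SCtree (Y : Type u) [TopologicalSpace Y] (C : List ℕ → Set Y) (y : Y) :
    Set (List ℕ) :=
  { s : List ℕ | y ∈ closure (C s) }

/-! ### Zoom spaces -/

/-- The set of isolated points of a topological space. -/
def IsolPts (Y : Type u) [TopologicalSpace Y] : Set Y := { y | IsOpen ({y} : Set Y) }

/-- The underlying set of the zoom space `Z(Y, X)`: the non-isolated points of `Y`
together with the disjoint union of the spaces `X i`, `i ∈ I_Y`. -/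
def ZoomCarrier (Y : Type u) [TopologicalSpace Y] (X : IsolPts Y → Type v) :
    Type (max u v) :=
  ({ y : Y // y ∉ IsolPts Y }) ⊕ ((i : IsolPts Y) × X i)

/-- The basic set `V_U ⊆ Z(Y, X)` associated with `U ⊆ Y`:
`V_U = (U ∖ I_Y) ∪ ⋃ {X i | i ∈ U ∩ I_Y}`. -/
def zoomVSet (Y : Type u) [TopologicalSpace Y] (X : IsolPts Y → Type v) (U : Set Y) :
    Set (ZoomCarrier Y X) :=
  { z | Sum.elim (fun y : { y : Y // y ∉ IsolPts Y } => (y : Y) ∈ U)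
      (fun p : (i : IsolPts Y) × X i => (p.1 : Y) ∈ U) z }

/-- The topology of the zoom space `Z(Y, X)`, generated by the open subsets of the
spaces `X i` together with the sets `V_U` for `U` open in `Y`. -/
instance zoomTopology (Y : Type u) [TopologicalSpace Y] (X : IsolPts Y → Type v)
    [∀ i, TopologicalSpace (X i)] : TopologicalSpace (ZoomCarrier Y X) :=
  TopologicalSpace.generateFrom
    ({ B | ∃ (i : IsolPts Y) (W : Set (X i)), IsOpen W ∧
        B = Sum.inr '' ((Sigma.mk i) '' W) } ∪
     { B | ∃ U : Set Y, IsOpen U ∧ B = zoomVSet Y X U })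

/-- The subset of `Z(Y, X)` which is the underlying set of the zoom space `Z(Ys, A)` of
a subspace `Ys ⊆ Y` with respect to subspaces `A i ⊆ X i`
(here the isolated points of `Ys` are identified with those of `Y`). -/
def zoomSub (Y : Type u) [TopologicalSpace Y] (X : IsolPts Y → Type v) (Ys : Set Y)
    (A : ∀ i : IsolPts Y, Set (X i)) : Set (ZoomCarrier Y X) :=
  { z | Sum.elim (fun y : { y : Y // y ∉ IsolPts Y } => (y : Y) ∈ Ys)
      (fun p : (i : IsolPts Y) × X i => p.2 ∈ A p.1) z }

/-! ### Broom sets and broom spaces -/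

/-- A forking sequence: a sequence of nonempty finite sequences with pairwise distinct
first entries. -/
def IsForking (f : ℕ → List ℕ) : Prop :=
  (∀ n, f n ≠ []) ∧ ∀ ⦃m n : ℕ⦄, m ≠ n → (f m).head? ≠ (f n).head?

/-- The hierarchy of finite broom sets: `B ∈ B_α` iff `IsBroomB α B`.
`B_0 = {{∅}}`; for odd `α`, `B_α = B_{<α} ∪ {h⌢B | B ∈ B_{α-1}, h ∈ ω^{<ω}}`; for even
`α > 0`, `B_α = B_{<α} ∪ {⋃_n f_n⌢B_n | B_n ∈ B_{<α}, (f_n) a forking sequence}`. -/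
inductive IsBroomB : Ordinal.{0} → Set (List ℕ) → Prop
  | base : IsBroomB 0 {[]}
  | mono {β α : Ordinal.{0}} {B : Set (List ℕ)} : β < α → IsBroomB β B → IsBroomB α B
  | odd {β : Ordinal.{0}} {B : Set (List ℕ)} (h : List ℕ) : EvenOrd β → IsBroomB β B →
      IsBroomB (β + 1) ((fun s => h ++ s) '' B)
  | even {α : Ordinal.{0}} {f : ℕ → List ℕ} {Bs : ℕ → Set (List ℕ)}
      (g : ℕ → Ordinal.{0}) :
      0 < α → EvenOrd α → IsForking f →
      (∀ n : ℕ, g n < α) → (∀ n : ℕ, IsBroomB (g n) (Bs n)) →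
      IsBroomB α (⋃ n : ℕ, (fun s => f n ++ s) '' Bs n)

/-- The infinite sequence `s⌢ν` obtained by extending the finite sequence `s` by `ν`. -/
def seqAppend (s : List ℕ) (ν : ℕ → ℕ) : ℕ → ℕ :=
  fun k => if h : k < s.length then s.get ⟨k, h⟩ else ν (k - s.length)

/-- `A` is a broom-extension of `B`:
`A = {s⌢f^s_n⌢ν^s_n | s ∈ B, n ∈ ω}` for forking sequences `(f^s_n)_n, s ∈ B`, and
points `ν^s_n ∈ ω^ω`. -/
def IsBroomExtension (B : Set (List ℕ)) (A : Set (ℕ → ℕ)) : Prop :=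
  ∃ (f : List ℕ → ℕ → List ℕ) (ν : List ℕ → ℕ → (ℕ → ℕ)),
    (∀ s ∈ B, IsForking (f s)) ∧
    A = { σ : ℕ → ℕ | ∃ s ∈ B, ∃ n : ℕ, σ = seqAppend (s ++ f s n) (ν s n) }

/-- The hierarchy of infinite broom sets: `A ∈ A_α` iff `A` is a broom-extension of some
`B ∈ B_α`. -/
def IsBroomA (α : Ordinal.{0}) (A : Set (ℕ → ℕ)) : Prop :=
  ∃ B : Set (List ℕ), IsBroomB α B ∧ IsBroomExtension B A

/-- `u` is a finite initial segment of the infinite sequence `σ`. -/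
def InfExtends (u : List ℕ) (σ : ℕ → ℕ) : Prop := seqPrefix σ u.length = u

/-- The tree of all finite initial segments of members of a set of infinite sequences. -/
def clTrInf (S : Set (ℕ → ℕ)) : Set (List ℕ) := { u | ∃ σ ∈ S, InfExtends u σ }

/-- The broom space `T_𝒜` on `ω^ω ∪ {∞}` (with `∞ = none`): every point of `ω^ω` is
isolated, and the neighborhood subbasis at `∞` consists of the complements of single
points of `ω^ω` and of the complements of the sets `A ∈ 𝒜`. -/
def broomTop (𝒜 : Set (Set (ℕ → ℕ))) : TopologicalSpace (Option (ℕ → ℕ)) :=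
  TopologicalSpace.generateFrom
    ({ S | ∃ σ : ℕ → ℕ, S = {Option.some σ} } ∪
     { S | ∃ σ : ℕ → ℕ, S = insert Option.none (Option.some '' ({σ}ᶜ)) } ∪
     { S | ∃ A ∈ 𝒜, S = insert Option.none (Option.some '' Aᶜ) })


/-! ### Auxiliary lemmas for Statement 6 -/

section Statement6Aux

theorem FBorel_def (Y : Type u) [TopologicalSpace Y] (a : Ordinal.{0}) :
    FBorel Y a =
      if a = 0 then { F | IsClosed F }
      else if EvenOrd a then
        { S | ∃ f : ℕ → Set Y, (∀ n, ∃ b, ∃ _ : b < a, f n ∈ FBorel Y b) ∧ S = ⋂ n, f n }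
      else
        { S | ∃ f : ℕ → Set Y, (∀ n, ∃ b, ∃ _ : b < a, f n ∈ FBorel Y b) ∧ S = ⋃ n, f n } := by
  unfold FBorel
  rw [WellFounded.fix_eq]

theorem FBorel_mono {Y : Type u} [TopologicalSpace Y] {b a : Ordinal.{0}} (h : b ≤ a) :
    FBorel Y b ⊆ FBorel Y a := by
  rcases h.lt_or_eq with h | rfl
  · intro S hS
    have ha : a ≠ 0 := (pos_iff_ne_zero).mp ((zero_le : (0 : Ordinal.{0}) ≤ b).trans_lt h)
    rw [FBorel_def, if_neg ha]
    split
    · exact ⟨fun _ => S, fun _ => ⟨b, h, hS⟩, (iInter_const S).symm⟩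
    · exact ⟨fun _ => S, fun _ => ⟨b, h, hS⟩, (iUnion_const S).symm⟩
  · exact subset_rfl

theorem mem_FBorel_of_isClosed {Y : Type u} [TopologicalSpace Y] {F : Set Y}
    (hF : IsClosed F) (a : Ordinal.{0}) : F ∈ FBorel Y a := by
  refine FBorel_mono (zero_le : (0 : Ordinal.{0}) ≤ a) ?_
  rw [FBorel_def, if_pos rfl]
  exact hF

theorem preimage_mem_FBorel {Y : Type u} {Z : Type v} [TopologicalSpace Y]
    [TopologicalSpace Z] {π : Z → Y} (hπ : Continuous π) :
    ∀ a : Ordinal.{0}, ∀ F ∈ FBorel Y a, π ⁻¹' F ∈ FBorel Z a := by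
  intro a
  induction a using Ordinal.induction with
  | h a IH =>
  intro F hF
  rw [FBorel_def] at hF ⊢
  by_cases h0 : a = 0
  · rw [if_pos h0] at hF ⊢
    exact IsClosed.preimage hπ hF
  · rw [if_neg h0] at hF ⊢
    by_cases he : EvenOrd a
    · rw [if_pos he] at hF ⊢
      obtain ⟨f, hf, rfl⟩ := hF
      refine ⟨fun n => π ⁻¹' f n, fun n => ?_, by rw [preimage_iInter]⟩
      obtain ⟨b, hb, hfb⟩ := hf n
      exact ⟨b, hb, IH b hb _ hfb⟩
    · rw [if_neg he] at hF ⊢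
      obtain ⟨f, hf, rfl⟩ := hF
      refine ⟨fun n => π ⁻¹' f n, fun n => ?_, by rw [preimage_iUnion]⟩
      obtain ⟨b, hb, hfb⟩ := hf n
      exact ⟨b, hb, IH b hb _ hfb⟩

theorem preimage_mem_SuslinF {Y : Type u} {Z : Type v} [TopologicalSpace Y]
    [TopologicalSpace Z] {π : Z → Y} (hπ : Continuous π) {F : Set Y}
    (hF : F ∈ SuslinF Y) : π ⁻¹' F ∈ SuslinF Z := by
  obtain ⟨C, hC, rfl⟩ := hF
  refine ⟨fun s => π ⁻¹' C s, fun s => (hC s).preimage hπ, ?_⟩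
  simp only [suslinOp, preimage_iUnion, preimage_iInter]

theorem exists_enum {a : Ordinal.{0}} (h0 : a ≠ 0) (ha : a < omega1) :
    ∃ γ : ℕ → Ordinal.{0}, (∀ k, γ k < a) ∧ ∀ b < a, ∃ k, γ k = b := by
  have hcard : Cardinal.mk (Set.Iio a) ≤ Cardinal.aleph0 := by
    rw [Ordinal.mk_Iio_ordinal]
    have h1 : a.card < Cardinal.aleph 1 := by
      rw [← Cardinal.lt_ord, Cardinal.ord_aleph]
      exact ha
    have h2 : a.card ≤ Cardinal.aleph0 := by
      rwa [← Cardinal.succ_aleph0, Order.lt_succ_iff] at h1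
    calc Cardinal.lift.{1} a.card ≤ Cardinal.lift.{1} Cardinal.aleph0 :=
          Cardinal.lift_le.2 h2
      _ = Cardinal.aleph0 := Cardinal.lift_aleph0
  have hcnt : Countable (Set.Iio a) := Cardinal.mk_le_aleph0_iff.mp hcard
  have hne : Nonempty (Set.Iio a) := ⟨⟨0, pos_iff_ne_zero.2 h0⟩⟩
  obtain ⟨f, hf⟩ := exists_surjective_nat (Set.Iio a)
  refine ⟨fun k => (f k).1, fun k => (f k).2, fun b hb => ?_⟩
  obtain ⟨k, hk⟩ := hf ⟨b, hb⟩
  exact ⟨k, congrArg Subtype.val hk⟩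

variable (W : Type u) [TopologicalSpace W] (Zf : IsolPts W → Type v)
  [∀ i, TopologicalSpace (Zf i)]

/-- The canonical projection of the zoom space onto the base space. -/
def zoomProj : ZoomCarrier W Zf → W :=
  Sum.elim (fun y => y.1) (fun p => p.1.1)

theorem zoomVSet_eq (U : Set W) : zoomVSet W Zf U = zoomProj W Zf ⁻¹' U := by
  ext z
  cases z <;> rfl

theorem continuous_zoomProj : Continuous (zoomProj W Zf) := by
  rw [continuous_def]
  intro U hU
  rw [← zoomVSet_eq]
  exact TopologicalSpace.isOpen_generateFrom_of_mem (Or.inr ⟨U, hU, rfl⟩)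

theorem isOpen_zoom_inr (i : IsolPts W) {V : Set (Zf i)} (hV : IsOpen V) :
    IsOpen (Sum.inr '' ((Sigma.mk i) '' V) : Set (ZoomCarrier W Zf)) :=
  TopologicalSpace.isOpen_generateFrom_of_mem (Or.inl ⟨i, V, hV, rfl⟩)

theorem isClosed_zoomSub {C : ∀ i, Set (Zf i)} (hC : ∀ i, IsClosed (C i)) :
    IsClosed (zoomSub W Zf Set.univ C) := by
  rw [← isOpen_compl_iff]
  have hcompl : (zoomSub W Zf Set.univ C)ᶜ =
      ⋃ i, Sum.inr '' ((Sigma.mk i) '' (C i)ᶜ) := by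
    ext z
    cases z with
    | inl y =>
      show ¬ True ↔ (Sum.inl y : ({ y : W // y ∉ IsolPts W } ⊕ ((i : IsolPts W) × Zf i))) ∈ ⋃ i, Sum.inr '' ((Sigma.mk i) '' (C i)ᶜ)
      simp
    | inr p =>
      obtain ⟨i, x⟩ := p
      show ¬ (x ∈ C i) ↔ (Sum.inr ⟨i, x⟩ : ({ y : W // y ∉ IsolPts W } ⊕ ((i : IsolPts W) × Zf i))) ∈ ⋃ i, Sum.inr '' ((Sigma.mk i) '' (C i)ᶜ)
      simp only [mem_compl_iff, zoomSub, mem_setOf_eq, Sum.elim_inr, mem_iUnion,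
        mem_image]
      constructor
      · intro hx
        exact ⟨i, ⟨i, x⟩, ⟨x, hx, rfl⟩, rfl⟩
      · rintro ⟨i', z', ⟨w, hw, rfl⟩, hz⟩
        rw [Sum.inr.injEq] at hz
        injection hz with h1 h2
        subst h1
        obtain rfl := eq_of_heq h2
        exact hw
  rw [hcompl]
  exact isOpen_iUnion fun i => isOpen_zoom_inr W Zf i (hC i).isOpen_compl

theorem zoomSub_iInter {ι : Sort*} (F : ι → ∀ i, Set (Zf i)) :
    zoomSub W Zf Set.univ (fun i => ⋂ n, F n i) =
      ⋂ n, zoomSub W Zf Set.univ (F n) := by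
  ext z
  simp only [mem_iInter]
  cases z with
  | inl y => exact ⟨fun _ _ => trivial, fun _ => trivial⟩
  | inr p =>
    show p.2 ∈ ⋂ n, F n p.1 ↔ ∀ n, p.2 ∈ F n p.1
    exact mem_iInter

theorem zoomSub_iUnion {ι : Sort*} [Nonempty ι] (F : ι → ∀ i, Set (Zf i)) :
    zoomSub W Zf Set.univ (fun i => ⋃ n, F n i) =
      ⋃ n, zoomSub W Zf Set.univ (F n) := by
  ext z
  simp only [mem_iUnion]
  cases z with
  | inl y => exact ⟨fun _ => ⟨Classical.arbitrary ι, trivial⟩, fun _ => trivial⟩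
  | inr p =>
    show p.2 ∈ ⋃ n, F n p.1 ↔ ∃ n, p.2 ∈ F n p.1
    exact mem_iUnion

theorem zoomSub_suslinOp (D : ∀ i, List ℕ → Set (Zf i)) :
    zoomSub W Zf Set.univ (fun i => suslinOp (D i)) =
      suslinOp (fun s => zoomSub W Zf Set.univ (fun i => D i s)) := by
  ext z
  simp only [suslinOp, mem_iUnion, mem_iInter]
  cases z with
  | inl y => exact ⟨fun _ => ⟨fun _ => 0, fun _ => trivial⟩, fun _ => trivial⟩
  | inr p =>
    show p.2 ∈ suslinOp (D p.1) ↔ ∃ σ : ℕ → ℕ, ∀ k, p.2 ∈ D p.1 (seqPrefix σ k)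
    simp [suslinOp]

theorem zoomSub_mem_FBorel :
    ∀ a : Ordinal.{0}, a < omega1 →
      ∀ C : ∀ i, Set (Zf i), (∀ i, C i ∈ FBorel (Zf i) a) →
        zoomSub W Zf Set.univ C ∈ FBorel (ZoomCarrier W Zf) a := by
  intro a
  induction a using Ordinal.induction with
  | h a IH =>
  intro ha C hC
  by_cases h0 : a = 0
  · subst h0
    have hcl : ∀ i, IsClosed (C i) := by
      intro i
      have := hC i
      rwa [FBorel_def, if_pos rfl] at this
    rw [FBorel_def, if_pos rfl]
    exact isClosed_zoomSub W Zf hcl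
  · obtain ⟨γ, hγlt, hγsurj⟩ := exists_enum h0 ha
    let e : ℕ ≃ ℕ × ℕ := (Denumerable.eqv (ℕ × ℕ)).symm
    by_cases he : EvenOrd a
    · have hC' : ∀ i, ∃ f : ℕ → Set (Zf i),
          (∀ n, ∃ b, ∃ _ : b < a, f n ∈ FBorel (Zf i) b) ∧ C i = ⋂ n, f n := by
        intro i
        have := hC i
        rwa [FBorel_def, if_neg h0, if_pos he] at this
      choose f hf hCeq using hC'
      set G : ℕ × ℕ → ∀ i, Set (Zf i) := fun p i =>
        if f i p.1 ∈ FBorel (Zf i) (γ p.2) then f i p.1 else Set.univ with hGdef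
      have hGmem : ∀ p i, G p i ∈ FBorel (Zf i) (γ p.2) := by
        intro p i
        simp only [hGdef]
        split
        · assumption
        · exact mem_FBorel_of_isClosed isClosed_univ _
      have hCeq2 : C = fun i => ⋂ p : ℕ × ℕ, G p i := by
        funext i
        rw [hCeq i]
        apply subset_antisymm
        · intro x hx
          refine mem_iInter.2 fun p => ?_
          simp only [hGdef]
          split
          · exact mem_iInter.1 hx p.1
          · exact mem_univ x
        · intro x hx
          refine mem_iInter.2 fun n => ?_
          obtain ⟨b, hb, hfb⟩ := hf i n
          obtain ⟨k, hk⟩ := hγsurj b hb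
          have hfb' : f i n ∈ FBorel (Zf i) (γ k) := hk ▸ hfb
          have hxk := mem_iInter.1 hx (n, k)
          simp only [hGdef] at hxk
          split at hxk
          · exact hxk
          · next h => exact absurd hfb' h
      rw [FBorel_def, if_neg h0, if_pos he]
      refine ⟨fun n => zoomSub W Zf Set.univ (G (e n)), fun n =>
        ⟨γ (e n).2, hγlt _, IH _ (hγlt _) ((hγlt _).trans ha) _ (hGmem _)⟩, ?_⟩
      rw [hCeq2, zoomSub_iInter]
      exact (e.surjective.iInter_comp fun p => zoomSub W Zf Set.univ (G p)).symm
    · have hC' : ∀ i, ∃ f : ℕ → Set (Zf i),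
          (∀ n, ∃ b, ∃ _ : b < a, f n ∈ FBorel (Zf i) b) ∧ C i = ⋃ n, f n := by
        intro i
        have := hC i
        rwa [FBorel_def, if_neg h0, if_neg he] at this
      choose f hf hCeq using hC'
      set G : ℕ × ℕ → ∀ i, Set (Zf i) := fun p i =>
        if f i p.1 ∈ FBorel (Zf i) (γ p.2) then f i p.1 else (∅ : Set (Zf i))
        with hGdef
      have hGmem : ∀ p i, G p i ∈ FBorel (Zf i) (γ p.2) := by
        intro p i
        simp only [hGdef]
        split
        · assumption
        · exact mem_FBorel_of_isClosed isClosed_empty _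
      have hCeq2 : C = fun i => ⋃ p : ℕ × ℕ, G p i := by
        funext i
        rw [hCeq i]
        apply subset_antisymm
        · intro x hx
          obtain ⟨n, hn⟩ := mem_iUnion.1 hx
          obtain ⟨b, hb, hfb⟩ := hf i n
          obtain ⟨k, hk⟩ := hγsurj b hb
          have hfb' : f i n ∈ FBorel (Zf i) (γ k) := hk ▸ hfb
          refine mem_iUnion.2 ⟨(n, k), ?_⟩
          simp only [hGdef]
          split
          · exact hn
          · next h => exact absurd hfb' h
        · intro x hx
          obtain ⟨p, hp⟩ := mem_iUnion.1 hx
          simp only [hGdef] at hp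
          split at hp
          · exact mem_iUnion.2 ⟨p.1, hp⟩
          · exact absurd hp (notMem_empty x)
      rw [FBorel_def, if_neg h0, if_neg he]
      refine ⟨fun n => zoomSub W Zf Set.univ (G (e n)), fun n =>
        ⟨γ (e n).2, hγlt _, IH _ (hγlt _) ((hγlt _).trans ha) _ (hGmem _)⟩, ?_⟩
      rw [hCeq2, zoomSub_iUnion]
      exact (e.surjective.iUnion_comp fun p => zoomSub W Zf Set.univ (G p)).symm

end Statement6Aux

/-- In a zoom space `Z(W, Z)`: (a) if `F ∈ F_α(W)` then
`V_F ∈ F_α(Z(W, Z))`; (b) if `C i ∈ F_α(Z i)` for every isolated point `i` of `W`, then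
the zoom space `Z(W, C)` (as a subset of `Z(W, Z)`) is in `F_α(Z(W, Z))`. -/
theorem zoom_basic_sets_complexity (W : Type u) [TopologicalSpace W] [T35Space W]
    (Zf : IsolPts W → Type u) [∀ i, TopologicalSpace (Zf i)] [∀ i, T35Space (Zf i)]
    [∀ i, Nonempty (Zf i)] (α : Ordinal.{0}) (hα : α ≤ omega1) :
    (∀ F : Set W, F ∈ FClass W α → zoomVSet W Zf F ∈ FClass (ZoomCarrier W Zf) α) ∧
    (∀ C : (i : IsolPts W) → Set (Zf i), (∀ i, C i ∈ FClass (Zf i) α) →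
      zoomSub W Zf Set.univ C ∈ FClass (ZoomCarrier W Zf) α) := by
  constructor
  · intro F hF
    rw [zoomVSet_eq]
    by_cases hlt : α < omega1
    · rw [FClass, if_pos hlt] at hF ⊢
      exact preimage_mem_FBorel (continuous_zoomProj W Zf) α F hF
    · rw [FClass, if_neg hlt] at hF ⊢
      exact preimage_mem_SuslinF (continuous_zoomProj W Zf) hF
  · intro C hC
    by_cases hlt : α < omega1
    · simp only [FClass, if_pos hlt] at hC ⊢
      exact zoomSub_mem_FBorel W Zf α hlt C hC
    · simp only [FClass, if_neg hlt] at hC ⊢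
      choose D hD hCeq using hC
      refine ⟨fun s => zoomSub W Zf Set.univ (fun i => D i s),
        fun s => isClosed_zoomSub W Zf (fun i => hD i s), ?_⟩
      have hCe : C = fun i => suslinOp (D i) := funext hCeq
      rw [hCe, zoomSub_suslinOp]


end FBorelPaper
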